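/- For d ≥ 2, a matrix-valued function F : ℝ^d → ℝ^{d×d} is isotropic (F(Q r) = Q F(r) Qᵀ for all orthogonal Q) if and only if there exist scalar functions λ, λ⊥ : ℝ≥0 → ℝ such that for all r ≠ 0, F(r) = λ(|r|²) P(r) + λ⊥(|r|²) P⊥(r), and F(0) is a multiple of the identity. In particular every isotropic matrix-valued function takes symmetric values. -/

import Mathlib

open Matrix

noncomputable def projOn {d : ℕ} (y : Fin d → ℝ) : Matrix (Fin d) (Fin d) ℝ :=
  (∑ i, y i ^ 2)⁻¹ • vecMulVec y y

noncomputable def projPerp {d : ℕ} (y : Fin d → ℝ) : Matrix (Fin d) (Fin d) ℝ :=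
  1 - projOn y

-- orthogonal preserves sum of squares
lemma sumsq_mulVec {d : ℕ} {Q : Matrix (Fin d) (Fin d) ℝ} (hQ : Q * Qᵀ = 1)
    (r : Fin d → ℝ) : ∑ i, (Q.mulVec r) i ^ 2 = ∑ i, r i ^ 2 := by
  have hQ' : Qᵀ * Q = 1 := mul_eq_one_comm.mp hQ
  have h1 : ∀ x : Fin d → ℝ, ∑ i, x i ^ 2 = x ⬝ᵥ x := by
    intro x; simp [dotProduct, sq]
  rw [h1, h1, Matrix.dotProduct_mulVec, ← Matrix.mulVec_transpose,
    Matrix.mulVec_mulVec, hQ', Matrix.one_mulVec]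

lemma vecMulVec_conj {d : ℕ} (Q : Matrix (Fin d) (Fin d) ℝ) (y : Fin d → ℝ) :
    Q * vecMulVec y y * Qᵀ = vecMulVec (Q.mulVec y) (Q.mulVec y) := by
  ext i j
  simp only [Matrix.mul_apply, vecMulVec_apply, transpose_apply, mulVec, dotProduct,
    Finset.sum_mul, Finset.mul_sum]
  exact Finset.sum_congr rfl fun k _ => Finset.sum_congr rfl fun l _ => by ring

lemma projOn_conj {d : ℕ} {Q : Matrix (Fin d) (Fin d) ℝ} (hQ : Q * Qᵀ = 1)
    (y : Fin d → ℝ) : Q * projOn y * Qᵀ = projOn (Q.mulVec y) := by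
  rw [projOn, projOn, sumsq_mulVec hQ, ← vecMulVec_conj Q y,
    Matrix.mul_smul, Matrix.smul_mul]

lemma projPerp_conj {d : ℕ} {Q : Matrix (Fin d) (Fin d) ℝ} (hQ : Q * Qᵀ = 1)
    (y : Fin d → ℝ) : Q * projPerp y * Qᵀ = projPerp (Q.mulVec y) := by
  rw [projPerp, projPerp, Matrix.mul_sub, Matrix.sub_mul, Matrix.mul_one, hQ,
    projOn_conj hQ]

-- existence of orthogonal matrix whose 0-th column is a given unit vector
lemma exists_orth_col {d : ℕ} [NeZero d] (u : Fin d → ℝ) (hu : ∑ i, u i ^ 2 = 1) :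
    ∃ Q : Matrix (Fin d) (Fin d) ℝ, Q * Qᵀ = 1 ∧ ∀ i, Q i 0 = u i := by
  let u' : EuclideanSpace ℝ (Fin d) := WithLp.toLp 2 u
  have hnorm : Orthonormal ℝ (({0} : Set (Fin d)).restrict (fun _ => u')) := by
    rw [orthonormal_iff_ite]
    rintro ⟨i, hi⟩ ⟨j, hj⟩
    simp only [Set.mem_singleton_iff] at hi hj
    subst hi; subst hj
    change (inner ℝ u' u' : ℝ) = 1
    rw [show (inner ℝ u' u' : ℝ) = ∑ i, u i * u i by rw [PiLp.inner_apply]; simp [u', sq]]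
    simpa [sq] using hu
  obtain ⟨b, hb⟩ := hnorm.exists_orthonormalBasis_extension_of_card_eq
    (by simp) 
  refine ⟨Matrix.of fun i j => b j i, ?_, ?_⟩
  · rw [mul_eq_one_comm]
    ext i j
    have := b.orthonormal
    rw [orthonormal_iff_ite] at this
    have h2 := this i j
    rw [show (inner ℝ (b i) (b j) : ℝ) = ∑ k, b i k * b j k by simp [PiLp.inner_apply, mul_comm]] at h2
    simp only [Matrix.mul_apply, transpose_apply, Matrix.of_apply, Matrix.one_apply]
    rw [← h2]
    try exact Finset.sum_congr rfl fun k _ => mul_comm _ _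
  · intro i
    have := hb 0 rfl
    simp only [Matrix.of_apply]
    rw [this]

section perm
variable {d : ℕ}

/-- permutation matrix -/
def permM (σ : Equiv.Perm (Fin d)) : Matrix (Fin d) (Fin d) ℝ :=
  Matrix.of fun i j => if σ i = j then 1 else 0

lemma permM_orth (σ : Equiv.Perm (Fin d)) : permM σ * (permM σ)ᵀ = 1 := by
  ext i j
  simp only [permM, Matrix.mul_apply, transpose_apply, Matrix.of_apply, Matrix.one_apply,
    ite_mul, one_mul, zero_mul]
  rw [Finset.sum_ite_eq Finset.univ (σ i)]
  simp [σ.injective.eq_iff, eq_comm]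

lemma permM_mulVec (σ : Equiv.Perm (Fin d)) (v : Fin d → ℝ) :
    (permM σ).mulVec v = fun i => v (σ i) := by
  ext i
  simp only [permM, mulVec, dotProduct, Matrix.of_apply, ite_mul, one_mul, zero_mul]
  rw [Finset.sum_ite_eq Finset.univ (σ i)]
  simp

lemma permM_conj (σ : Equiv.Perm (Fin d)) (M : Matrix (Fin d) (Fin d) ℝ) (i j : Fin d) :
    (permM σ * M * (permM σ)ᵀ) i j = M (σ i) (σ j) := by
  have h1 : (permM σ * M) i = fun k => M (σ i) k := by
    ext k
    simp only [permM, Matrix.mul_apply, Matrix.of_apply, ite_mul, one_mul, zero_mul]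
    rw [Finset.sum_ite_eq Finset.univ (σ i)]
    simp
  simp only [Matrix.mul_apply, transpose_apply]
  calc ∑ k, (permM σ * M) i k * permM σ j k
      = ∑ k, M (σ i) k * (if σ j = k then 1 else 0) := by
        refine Finset.sum_congr rfl fun k _ => ?_
        rw [h1]; rfl
    _ = M (σ i) (σ j) := by
        simp only [mul_ite, mul_one, mul_zero]
        rw [Finset.sum_ite_eq Finset.univ (σ j)]
        simp

/-- sign-flip matrix -/
def sgnM (k : Fin d) : Matrix (Fin d) (Fin d) ℝ :=
  Matrix.diagonal (fun m => if m = k then -1 else 1)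

lemma sgnM_orth (k : Fin d) : sgnM k * (sgnM k)ᵀ = 1 := by
  rw [sgnM, diagonal_transpose, diagonal_mul_diagonal]
  ext i j
  by_cases h : i = k <;>
    simp [Matrix.diagonal_apply, Matrix.one_apply, h]

lemma sgnM_conj (k : Fin d) (M : Matrix (Fin d) (Fin d) ℝ) (i j : Fin d) :
    (sgnM k * M * (sgnM k)ᵀ) i j =
      (if i = k then -1 else 1) * M i j * (if j = k then -1 else 1) := by
  rw [sgnM, diagonal_transpose, Matrix.mul_diagonal, Matrix.diagonal_mul]

lemma sgnM_mulVec (k : Fin d) (v : Fin d → ℝ) :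
    (sgnM k).mulVec v = fun m => (if m = k then -1 else 1) * v m := by
  ext m
  rw [sgnM, mulVec_diagonal]
end perm

section axis
variable {d : ℕ} [NeZero d] {F : (Fin d → ℝ) → Matrix (Fin d) (Fin d) ℝ}
  (hF : ∀ Q : Matrix (Fin d) (Fin d) ℝ, Q * Qᵀ = 1 → ∀ r, F (Q.mulVec r) = Q * F r * Qᵀ)

/-- axis vector -/
def axisV (d : ℕ) [NeZero d] (s : ℝ) : Fin d → ℝ := fun i => if i = 0 then s else 0

include hF

lemma offdiag_zero (s : ℝ) {i j : Fin d} (hij : i ≠ j) : F (axisV d s) i j = 0 := by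
  -- pick k ∈ {i, j}, k ≠ 0, exactly one of i,j equals k
  obtain ⟨k, hk0, hk⟩ : ∃ k : Fin d, k ≠ 0 ∧ ((i = k ∧ j ≠ k) ∨ (j = k ∧ i ≠ k)) := by
    by_cases hi : i = 0
    · have hj : j ≠ 0 := fun h => hij (hi.trans h.symm)
      exact ⟨j, hj, Or.inr ⟨rfl, fun h => hij h⟩⟩
    · exact ⟨i, hi, Or.inl ⟨rfl, fun h => hij h.symm⟩⟩
  have hfix : (sgnM k).mulVec (axisV d s) = axisV d s := by
    rw [sgnM_mulVec]
    ext m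
    by_cases hm : m = 0
    · subst hm
      rw [if_neg (Ne.symm hk0), one_mul]
    · simp [axisV, hm]
  have h := hF (sgnM k) (sgnM_orth k) (axisV d s)
  rw [hfix] at h
  have h2 := congrFun (congrFun h i) j
  rw [sgnM_conj] at h2
  rcases hk with ⟨hik, hjk⟩ | ⟨hjk, hik⟩
  · rw [if_pos hik, if_neg hjk] at h2
    change _ = _ at h2
    linarith [h2]
  · rw [if_pos hjk, if_neg hik] at h2
    change _ = _ at h2
    linarith [h2]

lemma diag_eq (s : ℝ) {i j : Fin d} (hi : i ≠ 0) (hj : j ≠ 0) :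
    F (axisV d s) i i = F (axisV d s) j j := by
  set σ := Equiv.swap i j
  have hσ0 : σ 0 = 0 := Equiv.swap_apply_of_ne_of_ne (Ne.symm hi) (Ne.symm hj)
  have hfix : (permM σ).mulVec (axisV d s) = axisV d s := by
    rw [permM_mulVec]
    ext m
    by_cases hm : m = 0
    · subst hm; rw [hσ0]
    · have : σ m ≠ 0 := fun h => hm (by
        have := congrArg σ.symm h
        rwa [Equiv.symm_apply_apply, ← hσ0, Equiv.symm_apply_apply] at this)
      simp [axisV, hm, this]
  have h := hF (permM σ) (permM_orth σ) (axisV d s)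
  rw [hfix] at h
  have h2 := congrFun (congrFun h i) i
  rw [permM_conj] at h2
  rwa [Equiv.swap_apply_left] at h2

lemma diag0_eq (i j : Fin d) : F 0 i i = F 0 j j := by
  by_cases hij : i = j
  · rw [hij]
  set σ := Equiv.swap i j
  have h := hF (permM σ) (permM_orth σ) 0
  rw [Matrix.mulVec_zero] at h
  have h2 := congrFun (congrFun h i) i
  rw [permM_conj] at h2
  rwa [Equiv.swap_apply_left] at h2

omit hF in
lemma axis_sumsq (s : ℝ) : ∑ i, axisV d s i ^ 2 = s ^ 2 := by
  simp [axisV, apply_ite (· ^ 2)]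

lemma axis_rep (hd2 : 2 ≤ d) {s : ℝ} (hs : s ≠ 0) :
    F (axisV d s) = F (axisV d s) 0 0 • projOn (axisV d s) +
      F (axisV d s) ⟨1, hd2⟩ ⟨1, hd2⟩ • projPerp (axisV d s) := by
  have h1 : (⟨1, hd2⟩ : Fin d) ≠ 0 := by
    intro h; exact absurd (congrArg Fin.val h) (by simp)
  ext i j
  simp only [Matrix.add_apply, Matrix.smul_apply, projOn, projPerp, Matrix.sub_apply,
    Matrix.one_apply, vecMulVec_apply, smul_eq_mul]
  rw [axis_sumsq]
  by_cases hi : i = 0 <;> by_cases hj : j = 0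
  · subst hi; subst hj
    simp only [axisV, if_pos rfl, if_true]
    have : (s ^ 2)⁻¹ * (s * s) = 1 := by
      field_simp [sq]
    rw [this]
    ring
  · subst hi
    rw [offdiag_zero hF s (Ne.symm hj), if_neg (Ne.symm hj)]
    simp [axisV, hj]
  · subst hj
    rw [offdiag_zero hF s hi, if_neg hi]
    simp [axisV, hi]
  · by_cases hij : i = j
    · subst hij
      rw [diag_eq hF s hi h1, if_pos rfl]
      simp [axisV, hi]
    · rw [offdiag_zero hF s hij, if_neg hij]
      simp [axisV, hi, hj]

end axis

lemma projOn_symm {d : ℕ} (y : Fin d → ℝ) : (projOn y)ᵀ = projOn y := by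
  rw [projOn, Matrix.transpose_smul]
  congr 1
  ext i j
  simp [vecMulVec_apply, mul_comm]

lemma projPerp_symm {d : ℕ} (y : Fin d → ℝ) : (projPerp y)ᵀ = projPerp y := by
  rw [projPerp, Matrix.transpose_sub, Matrix.transpose_one, projOn_symm]

theorem stmt8 {d : ℕ} (hd : 2 ≤ d) (F : (Fin d → ℝ) → Matrix (Fin d) (Fin d) ℝ) :
    ((∀ Q : Matrix (Fin d) (Fin d) ℝ, Q * Qᵀ = 1 →
        ∀ r, F (Q.mulVec r) = Q * F r * Qᵀ) ↔
      ((∃ lam lamPerp : ℝ → ℝ, ∀ r : Fin d → ℝ, r ≠ 0 →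
          F r = lam (∑ i, r i ^ 2) • projOn r + lamPerp (∑ i, r i ^ 2) • projPerp r) ∧
        ∃ κ : ℝ, F 0 = κ • (1 : Matrix (Fin d) (Fin d) ℝ))) ∧
    ((∀ Q : Matrix (Fin d) (Fin d) ℝ, Q * Qᵀ = 1 →
        ∀ r, F (Q.mulVec r) = Q * F r * Qᵀ) →
      ∀ r, (F r)ᵀ = F r) := by
  haveI : NeZero d := ⟨by omega⟩
  have haxis0 : axisV d (0 : ℝ) = 0 := by
    ext i; by_cases h : i = 0 <;> simp [axisV, h]
  have fwd : (∀ Q : Matrix (Fin d) (Fin d) ℝ, Q * Qᵀ = 1 →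
        ∀ r, F (Q.mulVec r) = Q * F r * Qᵀ) →
      ((∃ lam lamPerp : ℝ → ℝ, ∀ r : Fin d → ℝ, r ≠ 0 →
          F r = lam (∑ i, r i ^ 2) • projOn r + lamPerp (∑ i, r i ^ 2) • projPerp r) ∧
        ∃ κ : ℝ, F 0 = κ • (1 : Matrix (Fin d) (Fin d) ℝ)) := by
    intro hF
    constructor
    · refine ⟨fun t => F (axisV d (Real.sqrt t)) 0 0,
        fun t => F (axisV d (Real.sqrt t)) ⟨1, hd⟩ ⟨1, hd⟩, ?_⟩
      intro r hr
      have htpos : 0 < ∑ i, r i ^ 2 := by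
        obtain ⟨i, hi⟩ := Function.ne_iff.mp hr
        exact Finset.sum_pos' (fun i _ => sq_nonneg _)
          ⟨i, Finset.mem_univ i, pow_two_pos_of_ne_zero hi⟩
      set t := ∑ i, r i ^ 2 with ht
      set s := Real.sqrt t with hsdef
      have hs : s ≠ 0 := (Real.sqrt_pos.mpr htpos).ne'
      have hs2 : s ^ 2 = t := Real.sq_sqrt htpos.le
      have hu : ∑ i, (s⁻¹ * r i) ^ 2 = 1 := by
        simp_rw [mul_pow]
        rw [← Finset.mul_sum, ← ht, inv_pow, hs2, inv_mul_cancel₀ htpos.ne']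
      obtain ⟨Q, hQ, hQcol⟩ := exists_orth_col (fun i => s⁻¹ * r i) hu
      have hQr : Q.mulVec (axisV d s) = r := by
        ext i
        simp only [mulVec, dotProduct, axisV, mul_ite, mul_zero]
        rw [Finset.sum_ite_eq' Finset.univ (0 : Fin d)]
        rw [if_pos (Finset.mem_univ _), hQcol i]
        field_simp
      have key := hF Q hQ (axisV d s)
      rw [hQr] at key
      rw [key, axis_rep hF hd hs, Matrix.mul_add, Matrix.add_mul,
        Matrix.mul_smul, Matrix.smul_mul, Matrix.mul_smul, Matrix.smul_mul,
        projOn_conj hQ, projPerp_conj hQ, hQr]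
    · refine ⟨F 0 0 0, ?_⟩
      ext i j
      by_cases hij : i = j
      · subst hij
        rw [diag0_eq hF i 0]
        simp [Matrix.one_apply]
      · have := offdiag_zero hF (0 : ℝ) hij
        rw [haxis0] at this
        rw [this]
        simp [Matrix.one_apply, hij]
  refine ⟨⟨fwd, ?_⟩, ?_⟩
  · rintro ⟨⟨lam, lamPerp, hrep⟩, κ, h0⟩ Q hQ r
    by_cases hr : r = 0
    · subst hr
      rw [Matrix.mulVec_zero, h0, Matrix.mul_smul, Matrix.smul_mul, Matrix.mul_one, hQ]
    · have hQr0 : Q.mulVec r ≠ 0 := by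
        intro h
        have hQ' : Qᵀ * Q = 1 := mul_eq_one_comm.mp hQ
        apply hr
        have h2 := congrArg (Qᵀ.mulVec) h
        rwa [Matrix.mulVec_mulVec, hQ', Matrix.one_mulVec, Matrix.mulVec_zero] at h2
      rw [hrep _ hQr0, hrep r hr, sumsq_mulVec hQ, Matrix.mul_add, Matrix.add_mul,
        Matrix.mul_smul, Matrix.smul_mul, Matrix.mul_smul, Matrix.smul_mul,
        projOn_conj hQ, projPerp_conj hQ]
  · intro hF r
    obtain ⟨⟨lam, lamPerp, hrep⟩, κ, h0⟩ := fwd hF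
    by_cases hr : r = 0
    · subst hr
      rw [h0, Matrix.transpose_smul, Matrix.transpose_one]
    · rw [hrep r hr, Matrix.transpose_add, Matrix.transpose_smul, Matrix.transpose_smul,
        projOn_symm, projPerp_symm]
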